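/- (Induction claim (4) for ISTC) Let Ψ ∈ ℝ^{n×p} have unit-norm columns with mutual coherence μ satisfying μ·s < 1/2, where x† ∈ ℝ^p has support A† with |A†| = s ≥ 1, and y = Ψ x† + η with ‖η‖₂ ≤ ε. Let C₁ > 1/(1 − 2μs), α = (1 − 1/C₁)/(μs), γ ∈ [2μs/(1 − 1/C₁), 1), K ≥ 1 an integer, and λ* = C₁ ε. Define λ_ℓ = γ^ℓ λ₀ for ℓ ≥ 0, and define x(λ₀) = 0 and, for ℓ ≥ 1, x(λ_ℓ) as the result of K iterations of the map z ↦ S_{λ_ℓ}(z + Ψᵗ(y − Ψ z)) starting from x(λ_{ℓ−1}). If λ₀ is large enough that ‖x†‖_{ℓ∞} ≤ α γ λ₀, then for every ℓ ≥ 0 with λ_ℓ ≥ λ*, one has supp(x(λ_ℓ)) ⊂ A† and ‖x(λ_ℓ) − x†‖_{ℓ∞} ≤ α γ λ_ℓ. -/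

import Mathlib

open Finset Matrix

/-- The soft-thresholding operator `S_λ(t) = sgn(t) · max(|t| − λ, 0)`. -/
noncomputable def softThresh (lam t : ℝ) : ℝ := Real.sign t * max (|t| - lam) 0

lemma softThresh_eq_zero {lam t : ℝ} (h : |t| ≤ lam) : softThresh lam t = 0 := by
  unfold softThresh
  rw [max_eq_right (by linarith), mul_zero]

lemma abs_softThresh_sub_le {lam t : ℝ} (hlam : 0 ≤ lam) : |softThresh lam t - t| ≤ lam := by
  unfold softThresh
  rcases lt_trichotomy t 0 with ht | rfl | ht
  · rw [Real.sign_of_neg ht, abs_of_neg ht]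
    rcases le_or_gt (-t) lam with h | h
    · rw [max_eq_right (by linarith), mul_zero, zero_sub, abs_neg, abs_of_neg ht]
      linarith
    · rw [max_eq_left (by linarith), show (-1 : ℝ) * (-t - lam) - t = lam by ring,
        abs_of_nonneg hlam]
  · simp [hlam]
  · rw [Real.sign_of_pos ht, abs_of_pos ht, one_mul]
    rcases le_or_gt t lam with h | h
    · rw [max_eq_right (by linarith), zero_sub, abs_neg, abs_of_pos ht]
      linarith
    · rw [max_eq_left (by linarith), show t - lam - t = -lam by ring, abs_neg,
        abs_of_nonneg hlam]

set_option maxHeartbeats 1000000 in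
/-- Induction claim (4) for ISTC: along the continuation path `λ_ℓ = γ^ℓ lam₀`, with
`x(lam₀) = 0` and `x(λ_ℓ)` obtained by `K` soft-thresholding iterations at level `λ_ℓ`
warm-started from `x(λ_{ℓ−1})`, if `‖x†‖_{ℓ∞} ≤ αγlam₀`, then for every `ℓ` with
`λ_ℓ ≥ λ* = C₁ε` one has `supp(x(λ_ℓ)) ⊂ A†` and `‖x(λ_ℓ) − x†‖_{ℓ∞} ≤ αγλ_ℓ`. -/
theorem istc_induction_claim {n p : ℕ} (Ψ : Matrix (Fin n) (Fin p) ℝ)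
    (μ ε C₁ α γ lam₀ : ℝ) (s K : ℕ)
    (xdag : Fin p → ℝ) (η y : Fin n → ℝ) (Adag : Finset (Fin p))
    (hcol : ∀ i, ∑ k, Ψ k i ^ 2 = 1)
    (hcoh : ∀ i j, i ≠ j → |∑ k, Ψ k i * Ψ k j| ≤ μ) (hμpos : 0 < μ)
    (hsuppdag : Function.support xdag = (Adag : Set (Fin p)))
    (hcard : Adag.card = s) (hs : 1 ≤ s) (hμs : μ * s < 1 / 2)
    (hy : y = Ψ.mulVec xdag + η)
    (hη : Real.sqrt (∑ k, η k ^ 2) ≤ ε)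
    (hC : 1 / (1 - 2 * μ * s) < C₁)
    (hα : α = (1 - 1 / C₁) / (μ * s))
    (hγ : γ ∈ Set.Ico (2 * μ * s / (1 - 1 / C₁)) 1)
    (hK : 1 ≤ K)
    (xseq : ℕ → Fin p → ℝ)
    (hx0 : xseq 0 = 0)
    (hxstep : ∀ ℓ : ℕ, xseq (ℓ + 1) =
      (fun z : Fin p → ℝ => fun i =>
          softThresh (γ ^ (ℓ + 1) * lam₀)
            (z i + Ψ.transpose.mulVec (y - Ψ.mulVec z) i))^[K] (xseq ℓ))
    (hlam₀ : ‖xdag‖ ≤ α * γ * lam₀) :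
    ∀ ℓ : ℕ, C₁ * ε ≤ γ ^ ℓ * lam₀ →
      Function.support (xseq ℓ) ⊆ (Adag : Set (Fin p)) ∧
      ‖xseq ℓ - xdag‖ ≤ α * γ * (γ ^ ℓ * lam₀) := by
  -- basic facts
  have hε0 : 0 ≤ ε := le_trans (Real.sqrt_nonneg _) hη
  have hspos : (0 : ℝ) < s := by exact_mod_cast Nat.lt_of_lt_of_le Nat.zero_lt_one hs
  have hμs0 : 0 < μ * s := mul_pos hμpos hspos
  have h2μs : 0 < 1 - 2 * μ * s := by nlinarith
  have hC1 : 1 < C₁ := lt_of_le_of_lt (one_le_one_div h2μs (by nlinarith)) hC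
  have hC1pos : 0 < C₁ := lt_trans zero_lt_one hC1
  have hinvC : 1 / C₁ < 1 - 2 * μ * s := by
    rw [div_lt_iff₀ hC1pos]
    have h1 : 1 < C₁ * (1 - 2 * μ * s) := by
      have := (div_lt_iff₀ h2μs).mp hC
      linarith
    linarith [h1]
  have hα1 : 0 < 1 - 1 / C₁ := by
    have : 1 / C₁ < 1 := by linarith
    linarith
  have hαpos : 0 < α := by rw [hα]; exact div_pos hα1 hμs0
  have hμsα : μ * s * α = 1 - 1 / C₁ := by
    rw [hα]; field_simp
  have hγpos : 0 < γ := lt_of_lt_of_le (div_pos (by linarith) hα1) hγ.1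
  have hγ1 : γ < 1 := hγ.2
  have hαγ2 : 2 ≤ α * γ := by
    have h2 : α * (2 * μ * s / (1 - 1 / C₁)) = 2 := by
      rw [hα, div_mul_div_comm, div_eq_iff (by positivity)]
      ring
    calc (2 : ℝ) = α * (2 * μ * s / (1 - 1 / C₁)) := h2.symm
      _ ≤ α * γ := mul_le_mul_of_nonneg_left hγ.1 hαpos.le
  -- lam₀ > 0
  have hxdagne : xdag ≠ 0 := by
    obtain ⟨i, hi⟩ := Finset.card_pos.mp (hcard ▸ hs)
    intro h
    have : i ∈ Function.support xdag := by rw [hsuppdag]; exact_mod_cast hi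
    exact this (by simp [h])
  have hnormpos : 0 < ‖xdag‖ := norm_pos_iff.mpr hxdagne
  have hlam0pos : 0 < lam₀ := by
    by_contra h
    push_neg at h
    have : α * γ * lam₀ ≤ 0 :=
      mul_nonpos_of_nonneg_of_nonpos (mul_pos hαpos hγpos).le h
    linarith
  -- Cauchy–Schwarz componentwise noise bound
  have hc : ∀ i, |∑ k, Ψ k i * η k| ≤ ε := by
    intro i
    have h1 : (∑ k, Ψ k i * η k) ^ 2 ≤ (∑ k, (Ψ k i) ^ 2) * (∑ k, (η k) ^ 2) :=
      Finset.sum_mul_sq_le_sq_mul_sq _ _ _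
    rw [hcol i, one_mul] at h1
    calc |∑ k, Ψ k i * η k| = Real.sqrt ((∑ k, Ψ k i * η k) ^ 2) :=
        (Real.sqrt_sq_eq_abs _).symm
      _ ≤ Real.sqrt (∑ k, (η k) ^ 2) := Real.sqrt_le_sqrt h1
      _ ≤ ε := hη
  -- one-step lemma
  have step : ∀ (lam : ℝ) (z : Fin p → ℝ), 0 < lam → C₁ * ε ≤ lam →
      Function.support z ⊆ (Adag : Set (Fin p)) → ‖z - xdag‖ ≤ α * lam →
      Function.support (fun i =>
          softThresh lam (z i + Ψ.transpose.mulVec (y - Ψ.mulVec z) i))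
        ⊆ (Adag : Set (Fin p)) ∧
      ‖(fun i => softThresh lam (z i + Ψ.transpose.mulVec (y - Ψ.mulVec z) i)) - xdag‖
        ≤ α * γ * lam := by
    intro lam z hlampos hlamε hsuppz hnormz
    set w : Fin p → ℝ := fun i => z i + Ψ.transpose.mulVec (y - Ψ.mulVec z) i with hw_def
    -- componentwise error of w
    have hwerr : ∀ i, |w i - xdag i| ≤ μ * (s * ‖z - xdag‖) + ε := by
      intro i
      have hGii : (∑ k, Ψ k i * Ψ k i) = 1 := by
        simpa [pow_two] using hcol i
      have hcore : (Ψ.transpose.mulVec (y - Ψ.mulVec z)) i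
          = (∑ j, (∑ k, Ψ k i * Ψ k j) * (xdag j - z j)) + ∑ k, Ψ k i * η k := by
        have h1 : ∀ k, (y - Ψ.mulVec z) k = (∑ j, Ψ k j * (xdag j - z j)) + η k := by
          intro k
          simp only [hy, Pi.sub_apply, Pi.add_apply, Matrix.mulVec, dotProduct,
            mul_sub, Finset.sum_sub_distrib]
          ring
        simp only [Matrix.mulVec, dotProduct, Matrix.transpose_apply]
        calc ∑ k, Ψ k i * (y - Ψ.mulVec z) k
            = ∑ k, Ψ k i * ((∑ j, Ψ k j * (xdag j - z j)) + η k) := by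
              refine Finset.sum_congr rfl fun k _ => ?_
              rw [h1 k]
          _ = (∑ k, ∑ j, Ψ k i * Ψ k j * (xdag j - z j)) + ∑ k, Ψ k i * η k := by
              rw [← Finset.sum_add_distrib]
              refine Finset.sum_congr rfl fun k _ => ?_
              rw [mul_add, Finset.mul_sum]
              congr 1
              refine Finset.sum_congr rfl fun j _ => ?_
              ring
          _ = (∑ j, (∑ k, Ψ k i * Ψ k j) * (xdag j - z j)) + ∑ k, Ψ k i * η k := by
              rw [Finset.sum_comm]
              congr 1
              refine Finset.sum_congr rfl fun j _ => ?_
              rw [Finset.sum_mul]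
      have hexp : w i - xdag i =
          (∑ j ∈ Finset.univ.erase i, (∑ k, Ψ k i * Ψ k j) * (xdag j - z j))
            + ∑ k, Ψ k i * η k := by
        have hsplit : (∑ j, (∑ k, Ψ k i * Ψ k j) * (xdag j - z j))
            = (∑ k, Ψ k i * Ψ k i) * (xdag i - z i)
              + ∑ j ∈ Finset.univ.erase i, (∑ k, Ψ k i * Ψ k j) * (xdag j - z j) :=
          (Finset.add_sum_erase Finset.univ
            (fun j => (∑ k, Ψ k i * Ψ k j) * (xdag j - z j)) (Finset.mem_univ i)).symm
        have : w i = z i + (Ψ.transpose.mulVec (y - Ψ.mulVec z)) i := rfl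
        rw [this, hcore, hsplit, hGii]
        ring
      have hsum : ∑ j ∈ Finset.univ.erase i, |xdag j - z j| ≤ s * ‖z - xdag‖ := by
        have hzero : ∀ j : Fin p, j ∉ Adag → |xdag j - z j| = 0 := by
          intro j hj
          have h1 : xdag j = 0 := by
            by_contra h
            exact hj (by
              have : j ∈ Function.support xdag := h
              rw [hsuppdag] at this
              exact_mod_cast this)
          have h2 : z j = 0 := by
            by_contra h
            exact hj (by exact_mod_cast hsuppz h)
          simp [h1, h2]
        have hle : ∀ j : Fin p, |xdag j - z j| ≤ ‖z - xdag‖ := by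
          intro j
          rw [abs_sub_comm]
          simpa [Real.norm_eq_abs] using norm_le_pi_norm (z - xdag) j
        calc ∑ j ∈ Finset.univ.erase i, |xdag j - z j|
            ≤ ∑ j, |xdag j - z j| :=
              Finset.sum_le_sum_of_subset_of_nonneg (Finset.erase_subset _ _)
                (fun _ _ _ => abs_nonneg _)
          _ = ∑ j ∈ Adag, |xdag j - z j| :=
              (Finset.sum_subset (Finset.subset_univ _)
                (fun j _ hj => hzero j hj)).symm
          _ ≤ ∑ _j ∈ Adag, ‖z - xdag‖ := Finset.sum_le_sum fun j _ => hle j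
          _ = s * ‖z - xdag‖ := by
              rw [Finset.sum_const, hcard, nsmul_eq_mul]
      calc |w i - xdag i|
          ≤ |∑ j ∈ Finset.univ.erase i, (∑ k, Ψ k i * Ψ k j) * (xdag j - z j)|
            + |∑ k, Ψ k i * η k| := by rw [hexp]; exact abs_add_le _ _
        _ ≤ (∑ j ∈ Finset.univ.erase i, μ * |xdag j - z j|) + ε := by
            refine add_le_add ?_ (hc i)
            refine (Finset.abs_sum_le_sum_abs _ _).trans (Finset.sum_le_sum ?_)
            intro j hj
            rw [abs_mul]
            exact mul_le_mul_of_nonneg_right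
              (hcoh i j fun h => (Finset.mem_erase.mp hj).1 h.symm) (abs_nonneg _)
        _ ≤ μ * (s * ‖z - xdag‖) + ε := by
            rw [← Finset.mul_sum]
            exact add_le_add_left (mul_le_mul_of_nonneg_left hsum hμpos.le) ε
    -- key scalar bound
    have hεle : ε ≤ (1 / C₁) * lam := by
      rw [one_div, inv_mul_eq_div, le_div_iff₀ hC1pos]
      linarith [mul_comm C₁ ε]
    have hμnorm : μ * (s * ‖z - xdag‖) ≤ (1 - 1 / C₁) * lam := by
      have : μ * (s * ‖z - xdag‖) ≤ μ * s * (α * lam) := by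
        rw [← mul_assoc]
        exact mul_le_mul_of_nonneg_left hnormz hμs0.le
      calc μ * (s * ‖z - xdag‖) ≤ μ * s * (α * lam) := this
        _ = μ * s * α * lam := by ring
        _ = (1 - 1 / C₁) * lam := by rw [hμsα]
    have hbd : μ * (s * ‖z - xdag‖) + ε ≤ lam := by linarith
    constructor
    · -- support
      intro i hi
      simp only [Function.mem_support] at hi
      by_contra hiA
      have hxi : xdag i = 0 := by
        by_contra h
        exact hiA (by
          have : i ∈ Function.support xdag := h
          rw [hsuppdag] at this
          exact_mod_cast this)
      have : |w i| ≤ lam := by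
        have := hwerr i
        rw [hxi, sub_zero] at this
        linarith
      exact hi (softThresh_eq_zero this)
    · -- bound
      rw [pi_norm_le_iff_of_nonneg
        (by positivity : (0 : ℝ) ≤ α * γ * lam)]
      intro i
      simp only [Pi.sub_apply, Real.norm_eq_abs]
      have h1 : |softThresh lam (w i) - w i| ≤ lam := abs_softThresh_sub_le hlampos.le
      have h2 : |softThresh lam (w i) - xdag i| ≤ 2 * lam := by
        calc |softThresh lam (w i) - xdag i|
            = |(softThresh lam (w i) - w i) + (w i - xdag i)| := by ring_nf
          _ ≤ |softThresh lam (w i) - w i| + |w i - xdag i| := abs_add_le _ _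
          _ ≤ lam + lam := add_le_add h1 (le_trans (hwerr i) hbd)
          _ = 2 * lam := by ring
      calc |softThresh lam (w i) - xdag i| ≤ 2 * lam := h2
        _ ≤ α * γ * lam := mul_le_mul_of_nonneg_right hαγ2 hlampos.le
    -- end step
  -- iterate the step
  have iter : ∀ (lam : ℝ), 0 < lam → C₁ * ε ≤ lam →
      ∀ (z : Fin p → ℝ), Function.support z ⊆ (Adag : Set (Fin p)) →
        ‖z - xdag‖ ≤ α * lam → ∀ k : ℕ, 1 ≤ k →
      Function.support ((fun z : Fin p → ℝ => fun i =>
          softThresh lam (z i + Ψ.transpose.mulVec (y - Ψ.mulVec z) i))^[k] z)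
        ⊆ (Adag : Set (Fin p)) ∧
      ‖(fun z : Fin p → ℝ => fun i =>
          softThresh lam (z i + Ψ.transpose.mulVec (y - Ψ.mulVec z) i))^[k] z - xdag‖
        ≤ α * γ * lam := by
    intro lam hlampos hlamε z hsuppz hnormz k hk
    induction k with
    | zero => omega
    | succ m ih =>
      rcases Nat.eq_or_lt_of_le hk with h1 | h1
      · -- m = 0
        have hm : m = 0 := by omega
        subst hm
        simpa using step lam z hlampos hlamε hsuppz hnormz
      · -- m ≥ 1
        have hm : 1 ≤ m := by omega
        obtain ⟨ihs, ihn⟩ := ih hm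
        rw [Function.iterate_succ_apply']
        refine step lam _ hlampos hlamε ihs ?_
        calc ‖(fun z : Fin p → ℝ => fun i =>
              softThresh lam (z i + Ψ.transpose.mulVec (y - Ψ.mulVec z) i))^[m] z - xdag‖
            ≤ α * γ * lam := ihn
          _ ≤ α * lam := by
              have h2 : α * lam * γ ≤ α * lam * 1 :=
                mul_le_mul_of_nonneg_left hγ1.le (mul_pos hαpos hlampos).le
              linarith
  -- main induction
  intro ℓ
  induction ℓ with
  | zero =>
    intro _
    constructor
    · rw [hx0]
      simp
    · rw [hx0, zero_sub, norm_neg]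
      simpa using hlam₀
  | succ m ih =>
    intro hlam
    have hpow : 0 < γ ^ (m + 1) * lam₀ := by positivity
    have hmono : γ ^ (m + 1) * lam₀ ≤ γ ^ m * lam₀ := by
      rw [pow_succ]
      have h1 : 0 < γ ^ m := pow_pos hγpos m
      have h2 : γ ^ m * γ * lam₀ ≤ γ ^ m * 1 * lam₀ :=
        mul_le_mul_of_nonneg_right (mul_le_mul_of_nonneg_left hγ1.le h1.le) hlam0pos.le
      linarith
    obtain ⟨ihs, ihn⟩ := ih (le_trans hlam hmono)
    have ihn' : ‖xseq m - xdag‖ ≤ α * (γ ^ (m + 1) * lam₀) := by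
      calc ‖xseq m - xdag‖ ≤ α * γ * (γ ^ m * lam₀) := ihn
        _ = α * (γ ^ (m + 1) * lam₀) := by ring
    rw [hxstep m]
    exact iter (γ ^ (m + 1) * lam₀) hpow hlam (xseq m) ihs ihn' K hK
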